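/- Let q be a transcendental complex number (or more generally q ∈ ℂ* not a root of unity with (1-q^{-2l})^3 (q^{3l}-1)^2 ≠ 0), and let l be a nonzero integer. Then the 3×3 matrix C(q,l) with entries [l c_{ij}]_q, where (c_{ij}) is the affine A_2^{(1)} Cartan matrix, is invertible. -/
import Mathlib

theorem quantum_cartan_A2_invertible (q : ℂ) (hq : q ≠ 0)
    (hroot : ∀ k : ℤ, k ≠ 0 → q ^ k ≠ 1) (l : ℤ) (hl : l ≠ 0)
    (c : Matrix (Fin 3) (Fin 3) ℤ)
    (hc : ∀ i j, c i j = if i = j then 2 else -1) :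
    IsUnit (Matrix.of fun i j : Fin 3 =>
      (q ^ (l * c i j) - q ^ (-(l * c i j))) / (q - q⁻¹)) := by
  rw [Matrix.isUnit_iff_isUnit_det, isUnit_iff_ne_zero, Matrix.det_fin_three]
  simp only [Matrix.of_apply, hc, Fin.isValue,
    show ((0:Fin 3) = 1) = False from by decide, show ((0:Fin 3) = 2) = False from by decide,
    show ((1:Fin 3) = 0) = False from by decide, show ((1:Fin 3) = 2) = False from by decide,
    show ((2:Fin 3) = 0) = False from by decide, show ((2:Fin 3) = 1) = False from by decide,
    show ((0:Fin 3) = 0) = True from by decide, show ((1:Fin 3) = 1) = True from by decide,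
    show ((2:Fin 3) = 2) = True from by decide, if_true, if_false]
  simp only [zpow_mul, zpow_neg, mul_neg, mul_one, zpow_one]
  simp only [inv_inv, show (2:ℤ) = ((2:ℕ):ℤ) from rfl, zpow_natCast]
  obtain ⟨t, htd⟩ : ∃ t, t = q ^ l := ⟨_, rfl⟩
  obtain ⟨s, hsd⟩ : ∃ s, s = q - q⁻¹ := ⟨_, rfl⟩
  rw [← htd, ← hsd]
  have ht0 : t ≠ 0 := htd ▸ zpow_ne_zero l hq
  have hs0 : s ≠ 0 := by
    rw [hsd, sub_ne_zero]
    intro h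
    apply hroot 2 (by norm_num)
    have hqq : q * q = 1 := by
      nth_rewrite 2 [h]
      exact mul_inv_cancel₀ hq
    rw [show (2:ℤ) = 1 + 1 by norm_num, zpow_add₀ hq, zpow_one]
    exact hqq
  have h1 : t ≠ 1 := by rw [htd]; exact hroot l hl
  have h2 : t ^ 2 - 1 ≠ 0 := by
    rw [sub_ne_zero, htd, ← zpow_natCast, ← zpow_mul]
    exact hroot (l * 2) (by omega)
  have h3 : t ^ 3 - 1 ≠ 0 := by
    rw [sub_ne_zero, htd, ← zpow_natCast, ← zpow_mul]
    exact hroot (l * 3) (by omega)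
  have hp1 : t + 1 ≠ 0 := by
    intro h
    apply h2
    rw [show t = -1 by linear_combination h]
    ring
  have h1' : t - 1 ≠ 0 := sub_ne_zero.mpr h1
  obtain ⟨A, hA⟩ : ∃ x, x = (t ^ 2 - (t ^ 2)⁻¹) / s := ⟨_, rfl⟩
  obtain ⟨B, hB⟩ : ∃ x, x = (t⁻¹ - t) / s := ⟨_, rfl⟩
  rw [← hA, ← hB]
  have hAB : A - B = (t^3-1)*(t+1)/(t^2*s) := by
    rw [hA, hB]
    field_simp
    ring
  have hAB2 : A + 2*B = (t^2-1)*(t-1)^2/(t^2*s) := by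
    rw [hA, hB]
    field_simp
    ring
  have keyfact : A * A * A - A * B * B - B * B * A + B * B * B + B * B * B - B * A * B
      = (A - B)^2 * (A + 2*B) := by ring
  rw [keyfact, hAB, hAB2]
  have hden : t^2 * s ≠ 0 := mul_ne_zero (pow_ne_zero 2 ht0) hs0
  exact mul_ne_zero (pow_ne_zero 2 (div_ne_zero (mul_ne_zero h3 hp1) hden))
    (div_ne_zero (mul_ne_zero h2 (pow_ne_zero 2 h1')) hden)
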